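/- arXiv:2010.04487 — 4 statements merged into one kernel-verified Lean document; each statement's English description precedes it below -/
import Mathlib

section
/- Let $\Delta \in \mathbb{C}^{m\times m}$ with entries $\Delta_{j,l} = A_{j,l} + i B_{j,l}$ and $M_{j,l} = |\Delta_{j,l}|$, and let $\rho = \mathrm{diag}(\rho_1,\dots,\rho_m)$ with $\rho_i \in \mathbb{R}$. Define $R_i = \sum_{j \ne i} M_{j,i}$ and $G = (I - \rho) - \Delta \rho$. If for every $i$: (a) $R_i < 1 + A_{i,i}$, (b) $0 < \rho_i < 2(1 + A_{i,i} - R_i)/(1 + 2A_{i,i} + M_{i,i}^2 - R_i^2)$, and (c) $\rho_i R_i < 1$, then every eigenvalue of $G$ has modulus strictly less than 1. -/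
open Matrix Finset

lemma my_spectrum_transpose {n : Type*} [Fintype n] [DecidableEq n]
    (A : Matrix n n ℂ) : spectrum ℂ Aᵀ = spectrum ℂ A := by
  ext μ
  simp only [spectrum.mem_iff, not_iff_not]
  rw [Matrix.isUnit_iff_isUnit_det, Matrix.isUnit_iff_isUnit_det]
  have : (algebraMap ℂ (Matrix n n ℂ) μ - Aᵀ) = (algebraMap ℂ (Matrix n n ℂ) μ - A)ᵀ := by
    ext i j
    by_cases h : i = j
    · simp [Matrix.algebraMap_matrix_apply, Matrix.transpose_apply, h]
    · simp [Matrix.algebraMap_matrix_apply, Matrix.transpose_apply, h,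
        (Ne.symm h : j ≠ i)]
  rw [this, Matrix.det_transpose]

theorem ilc_convergence_conditions (m : ℕ)
    (Δ : Matrix (Fin m) (Fin m) ℂ) (ρ : Fin m → ℝ)
    (A : Fin m → Fin m → ℝ) (M : Fin m → Fin m → ℝ) (R : Fin m → ℝ)
    (hA : ∀ j l, A j l = (Δ j l).re)
    (hM : ∀ j l, M j l = ‖Δ j l‖)
    (hR : ∀ i, R i = ∑ j ∈ univ \ {i}, M j i)
    (ha : ∀ i, R i < 1 + A i i)
    (hb : ∀ i, 0 < ρ i ∧
      ρ i < 2 * (1 + A i i - R i) / (1 + 2 * A i i + (M i i) ^ 2 - (R i) ^ 2))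
    (hc : ∀ i, ρ i * R i < 1) :
    ∀ μ ∈ spectrum ℂ
        ((1 - Matrix.diagonal (fun i => (ρ i : ℂ))) -
          Δ * Matrix.diagonal (fun i => (ρ i : ℂ))),
      ‖μ‖ < 1 := by
  intro μ hμ
  set G : Matrix (Fin m) (Fin m) ℂ :=
    (1 - Matrix.diagonal (fun i => (ρ i : ℂ))) - Δ * Matrix.diagonal (fun i => (ρ i : ℂ)) with hG
  rw [← my_spectrum_transpose] at hμ
  rw [← AlgEquiv.spectrum_eq (Matrix.toLinAlgEquiv <| Pi.basisFun ℂ (Fin m)),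
    ← Module.End.hasEigenvalue_iff_mem_spectrum] at hμ
  obtain ⟨k, hk⟩ := eigenvalue_mem_ball hμ
  rw [Metric.mem_closedBall] at hk
  -- compute entries
  have hdiag : Gᵀ k k = 1 - (ρ k : ℂ) * (1 + Δ k k) := by
    simp [hG, Matrix.transpose_apply, Matrix.sub_apply, Matrix.one_apply,
      Matrix.diagonal_apply, Matrix.mul_apply, Finset.sum_eq_single k]
    ring
  have hoff : ∀ j, j ≠ k → ‖Gᵀ k j‖ = M j k * ρ k := by
    intro j hj
    have : Gᵀ k j = -(Δ j k * (ρ k : ℝ)) := by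
      simp [hG, Matrix.transpose_apply, Matrix.sub_apply, Matrix.one_apply, hj, hj.symm,
        Matrix.diagonal_apply, Matrix.mul_apply, Finset.sum_eq_single k]
    rw [this, norm_neg]
    simp [hM, abs_of_pos (hb k).1]
  have hradius : ∑ j ∈ Finset.univ.erase k, ‖Gᵀ k j‖ = R k * ρ k := by
    rw [hR, ← Finset.erase_eq, Finset.sum_mul]
    exact Finset.sum_congr rfl fun j hj => hoff j (Finset.mem_erase.mp hj).1
  have hp : 0 < ρ k := (hb k).1
  have hr0 : 0 ≤ R k := by
    rw [hR]
    exact Finset.sum_nonneg fun j _ => by rw [hM]; positivity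
  have hMa : |A k k| ≤ M k k := by rw [hA, hM]; exact Complex.abs_re_le_norm _
  have hD : 0 < 1 + 2 * A k k + (M k k) ^ 2 - (R k) ^ 2 := by
    have h1 := ha k
    nlinarith [abs_nonneg (A k k), le_abs_self (A k k), neg_abs_le (A k k)]
  have hkey : ρ k * (1 + 2 * A k k + (M k k) ^ 2 - (R k) ^ 2) <
      2 * (1 + A k k - R k) := by
    have h2 := (hb k).2
    rw [div_eq_mul_inv] at h2
    calc ρ k * (1 + 2 * A k k + (M k k) ^ 2 - (R k) ^ 2)
        < 2 * (1 + A k k - R k) * (1 + 2 * A k k + (M k k) ^ 2 - (R k) ^ 2)⁻¹ *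
          (1 + 2 * A k k + (M k k) ^ 2 - (R k) ^ 2) := mul_lt_mul_of_pos_right h2 hD
      _ = 2 * (1 + A k k - R k) := by field_simp
  have hb2 : ‖Gᵀ k k‖ < 1 - ρ k * R k := by
    have hpos : 0 < 1 - ρ k * R k := by linarith [hc k]
    rw [hdiag]
    have habs : (‖1 - (ρ k : ℂ) * (1 + Δ k k)‖) ^ 2 =
        (1 - ρ k * (1 + A k k)) ^ 2 + (ρ k) ^ 2 * (Δ k k).im ^ 2 := by
      rw [← Complex.normSq_eq_norm_sq, Complex.normSq_apply]
      simp [hA]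
      ring
    have hM2 : (A k k) ^ 2 + (Δ k k).im ^ 2 = (M k k) ^ 2 := by
      rw [hA, hM, Complex.sq_norm, Complex.normSq_apply]
      ring
    nlinarith [norm_nonneg (1 - (ρ k : ℂ) * (1 + Δ k k)), sq_nonneg (Δ k k).im,
      sq_nonneg (‖1 - (ρ k : ℂ) * (1 + Δ k k)‖ - (1 - ρ k * R k)),
      sq_nonneg (‖1 - (ρ k : ℂ) * (1 + Δ k k)‖ + (1 - ρ k * R k))]
  have hdist : ‖μ - Gᵀ k k‖ ≤ R k * ρ k := by
    rw [← hradius]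
    simpa [Complex.dist_eq] using hk
  calc ‖μ‖ = ‖(μ - Gᵀ k k) + Gᵀ k k‖ := by ring_nf
    _ ≤ ‖μ - Gᵀ k k‖ + ‖Gᵀ k k‖ := norm_add_le _ _
    _ < R k * ρ k + (1 - ρ k * R k) := by linarith
    _ = 1 := by ring
end

section
/- Let $\rho > 0$ and $\Delta \in \mathbb{C}$ with $\Delta = A + iB$, $M = |\Delta|$, and let $R \ge 0$ satisfy $R < 1 + A$ and $\rho R < 1$ and $0 < \rho < 2(1 + A - R)/(1 + 2A + M^2 - R^2)$. Then $|1 - \rho - \rho\Delta| < 1 - \rho R$. -/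
theorem ilc_scalar_contraction (ρ : ℝ) (Δ : ℂ) (A B M R : ℝ)
    (hA : A = Δ.re) (hB : B = Δ.im) (hM : M = ‖Δ‖)
    (hρ : 0 < ρ) (hR0 : 0 ≤ R) (hR1 : R < 1 + A) (hρR : ρ * R < 1)
    (hρub : ρ < 2 * (1 + A - R) / (1 + 2 * A + M ^ 2 - R ^ 2)) :
    ‖1 - (ρ : ℂ) - (ρ : ℂ) * Δ‖ < 1 - ρ * R := by
  have hM2 : M ^ 2 = A ^ 2 + B ^ 2 := by
    rw [hM, Complex.sq_norm, Complex.normSq_apply, hA, hB]; ring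
  have hden : 0 < 1 + 2 * A + M ^ 2 - R ^ 2 := by nlinarith [sq_nonneg B]
  have hkey : ρ * (1 + 2 * A + M ^ 2 - R ^ 2) < 2 * (1 + A - R) :=
    (lt_div_iff₀ hden).mp hρub
  have h1 : 0 < 1 - ρ * R := by linarith
  have hsq : (‖1 - (ρ : ℂ) - (ρ : ℂ) * Δ‖) ^ 2 < (1 - ρ * R) ^ 2 := by
    rw [Complex.sq_norm, Complex.normSq_apply]
    simp only [Complex.sub_re, Complex.sub_im, Complex.one_re, Complex.one_im,
      Complex.ofReal_re, Complex.ofReal_im, Complex.mul_re, Complex.mul_im, ← hA, ← hB]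
    nlinarith [sq_nonneg B, mul_pos hρ hρ]
  exact lt_of_pow_lt_pow_left₀ 2 h1.le hsq
end

section
/- Let $\Delta \in \mathbb{C}^{m\times m}$ with $|\Delta_{j,l}| < \overline{\Delta}_{j,l}$ for all $j,l$, where $\overline{\Delta}_{j,l} > 0$. Let $\rho = \mathrm{diag}(\rho_1,\dots,\rho_m)$ and set $\overline{\Delta}_{R,i} = \sum_{j\ne i} \overline{\Delta}_{j,i}$. Suppose for every $i$: (a) $\overline{\Delta}_{R,i} < 1 - \overline{\Delta}_{i,i}$, (b) $\rho_i \overline{\Delta}_{R,i} < 1$, and (c) $0 < \rho_i < \min_{p=\pm 1} \dfrac{2(1 + p\overline{\Delta}_{i,i} - \overline{\Delta}_{R,i})}{1 + 2p\overline{\Delta}_{i,i} + \overline{\Delta}_{i,i}^2 - \overline{\Delta}_{R,i}^2}$. Then the spectral radius of $G = (I - \rho) - \Delta\rho$ is strictly less than 1. -/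
open Matrix Finset

lemma spectrum_transpose_mem {n : ℕ} (A : Matrix (Fin n) (Fin n) ℂ) (μ : ℂ)
    (h : μ ∈ spectrum ℂ A) : μ ∈ spectrum ℂ Aᵀ := by
  rw [spectrum.mem_iff] at h ⊢
  intro hu
  apply h
  rw [Matrix.isUnit_iff_isUnit_det] at hu ⊢
  have : (algebraMap ℂ (Matrix (Fin n) (Fin n) ℂ) μ - Aᵀ) =
      (algebraMap ℂ (Matrix (Fin n) (Fin n) ℂ) μ - A)ᵀ := by
    rw [Matrix.transpose_sub]
    congr 1
    simp [Matrix.algebraMap_eq_diagonal]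
  rw [this, Matrix.det_transpose] at hu
  exact hu

theorem ilc_bounded_uncertainty_convergence (m : ℕ)
    (Δ : Matrix (Fin m) (Fin m) ℂ) (Δb : Fin m → Fin m → ℝ)
    (hΔb : ∀ j l, 0 < Δb j l)
    (hΔ : ∀ j l, ‖Δ j l‖ < Δb j l)
    (ρ : Fin m → ℝ) (ΔR : Fin m → ℝ)
    (hΔR : ∀ i, ΔR i = ∑ j ∈ univ \ {i}, Δb j i)
    (ha : ∀ i, ΔR i < 1 - Δb i i)
    (hb : ∀ i, ρ i * ΔR i < 1)
    (hc : ∀ i, 0 < ρ i ∧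
      ρ i < min
        (2 * (1 + Δb i i - ΔR i) / (1 + 2 * Δb i i + (Δb i i) ^ 2 - (ΔR i) ^ 2))
        (2 * (1 + (-1 : ℝ) * Δb i i - ΔR i) /
          (1 + 2 * (-1 : ℝ) * Δb i i + (Δb i i) ^ 2 - (ΔR i) ^ 2))) :
    ∀ μ ∈ spectrum ℂ
        ((1 - Matrix.diagonal (fun i => (ρ i : ℂ))) -
          Δ * Matrix.diagonal (fun i => (ρ i : ℂ))),
      ‖μ‖ < 1 := by
  intro μ hμ
  set G : Matrix (Fin m) (Fin m) ℂ :=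
    (1 - Matrix.diagonal (fun i => (ρ i : ℂ))) - Δ * Matrix.diagonal (fun i => (ρ i : ℂ)) with hG
  -- pass to the transpose and get an eigenvalue of toLin'
  have hμt : μ ∈ spectrum ℂ Gᵀ := spectrum_transpose_mem G μ hμ
  have hμt' : μ ∈ spectrum ℂ (Matrix.toLin' Gᵀ) := by
    rwa [← AlgEquiv.spectrum_eq (Matrix.toLinAlgEquiv' (R := ℂ) (n := Fin m)) Gᵀ] at hμt
  have heig : Module.End.HasEigenvalue (Matrix.toLin' Gᵀ) μ :=
    Module.End.HasEigenvalue.of_mem_spectrum hμt'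
  obtain ⟨i, hball⟩ := eigenvalue_mem_ball heig
  rw [Metric.mem_closedBall, dist_eq_norm] at hball
  -- compute entries
  have hdiag : Gᵀ i i = (1 : ℂ) - (ρ i : ℂ) - Δ i i * (ρ i : ℂ) := by
    simp [hG, Matrix.transpose_apply, Matrix.sub_apply, Matrix.one_apply,
      Matrix.diagonal_apply, Matrix.mul_diagonal]
  have hoff : ∀ j ∈ Finset.univ.erase i, ‖Gᵀ i j‖ = ‖Δ j i‖ * ρ i := by
    intro j hj
    have hne : j ≠ i := Finset.ne_of_mem_erase hj
    simp [hG, Matrix.transpose_apply, Matrix.sub_apply, Matrix.one_apply,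
      Matrix.diagonal_apply, Matrix.mul_diagonal, hne,
      _root_.map_mul, Complex.norm_real, abs_of_pos (hc i).1]
  -- bound the off-diagonal sum
  have hsum : (∑ j ∈ Finset.univ.erase i, ‖Gᵀ i j‖) ≤ ρ i * ΔR i := by
    rw [Finset.sum_congr rfl hoff, hΔR i]
    have : (univ \ {i} : Finset (Fin m)) = Finset.univ.erase i := by
      ext x; simp [Finset.mem_erase, and_comm]
    rw [this, Finset.mul_sum]
    apply Finset.sum_le_sum
    intro j hj
    rw [mul_comm (‖Δ j i‖)]
    exact mul_le_mul_of_nonneg_left (le_of_lt (hΔ j i)) (le_of_lt (hc i).1)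
  -- real quantities
  set r := ρ i with hr
  set d := Δb i i with hd
  set s := ΔR i with hs
  have hr0 : 0 < r := (hc i).1
  have hd0 : 0 < d := hΔb i i
  have hs0 : 0 ≤ s := by
    rw [hs, hΔR i]
    exact Finset.sum_nonneg fun j _ => (hΔb j i).le
  have hds : s < 1 - d := ha i
  -- |μ| ≤ |μ - c| + |c| < |1 - r| + r*d + r*s
  have habs : ‖μ‖ ≤ ‖μ - Gᵀ i i‖ + ‖Gᵀ i i‖ := by
    calc ‖μ‖ = ‖(μ - Gᵀ i i) + Gᵀ i i‖ := by ring_nf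
    _ ≤ ‖μ - Gᵀ i i‖ + ‖Gᵀ i i‖ := norm_add_le _ _
  have hc2 : ‖Gᵀ i i‖ < |1 - r| + r * d := by
    rw [hdiag]
    calc ‖(1 : ℂ) - (r : ℂ) - Δ i i * (r : ℂ)‖
        ≤ ‖(1 : ℂ) - (r : ℂ)‖ + ‖Δ i i * (r : ℂ)‖ := norm_sub_le _ _
    _ = |1 - r| + ‖Δ i i‖ * r := by
        have e1 : ‖(1 : ℂ) - (r : ℂ)‖ = |1 - r| := by
          rw [show (1 : ℂ) - (r : ℂ) = ((1 - r : ℝ) : ℂ) by push_cast; ring,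
            Complex.norm_real, Real.norm_eq_abs]
        have e2 : ‖Δ i i * (r : ℂ)‖ = ‖Δ i i‖ * r := by
          rw [norm_mul, Complex.norm_real, Real.norm_eq_abs,
            abs_of_pos hr0]
        rw [e1, e2]
    _ < |1 - r| + r * d := by
        have := hΔ i i
        rw [← hd] at this
        nlinarith
  have hkey : ‖μ‖ < |1 - r| + r * d + r * s := by
    have h1 : ‖μ - Gᵀ i i‖ ≤ r * s := hball.trans hsum
    linarith
  -- final arithmetic
  rcases le_or_gt r 1 with h1 | h1
  · rw [abs_of_nonneg (by linarith)] at hkey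
    nlinarith
  · rw [abs_of_neg (by linarith)] at hkey
    -- use the first branch of the min bound: r < 2/(1+d+s)
    have hmin := (hc i).2
    have hbound : r < 2 * (1 + d - s) / (1 + 2 * d + d ^ 2 - s ^ 2) :=
      lt_of_lt_of_le hmin (min_le_left _ _)
    have hden : 0 < 1 + 2 * d + d ^ 2 - s ^ 2 := by nlinarith
    rw [lt_div_iff₀ hden] at hbound
    -- r * ((1+d-s)(1+d+s)) < 2 (1+d-s), with 1+d-s > 0
    nlinarith [hr0, hd0, hs0]
end

section
/- Let $\Delta \in \mathbb{C}^{m\times m}$ with $\sum_{j=1}^m |\Delta_{j,i}| < 1$ for every column $i$ (i.e., the column sums of moduli are each less than 1). Then there exists $\rho_0 > 0$ such that for all diagonal $\rho = \mathrm{diag}(\rho_1,\dots,\rho_m)$ with $0 < \rho_i < \rho_0$ for each $i$, the spectral radius of $G = (I-\rho) - \Delta\rho$ is less than 1. In fact any $0 < \rho_i \le 1$ suffices. -/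
open Matrix Finset

lemma ilc_spectrum_transpose {m : ℕ} (A : Matrix (Fin m) (Fin m) ℂ) {μ : ℂ}
    (hμ : μ ∈ spectrum ℂ A) : μ ∈ spectrum ℂ Aᵀ := by
  rw [spectrum.mem_iff] at hμ ⊢
  intro hu
  apply hμ
  rw [Matrix.isUnit_iff_isUnit_det] at hu ⊢
  have : (algebraMap ℂ (Matrix (Fin m) (Fin m) ℂ) μ - Aᵀ) =
      (algebraMap ℂ (Matrix (Fin m) (Fin m) ℂ) μ - A)ᵀ := by
    rw [Matrix.transpose_sub]
    congr 1
    ext i j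
    simp [Matrix.algebraMap_matrix_apply, Matrix.transpose_apply, eq_comm]
  rw [this, Matrix.det_transpose] at hu
  exact hu

lemma ilc_key {m : ℕ} (Δ : Matrix (Fin m) (Fin m) ℂ)
    (h : ∀ i, ∑ j, ‖Δ j i‖ < 1)
    (ρ : Fin m → ℝ) (hρ : ∀ i, 0 < ρ i ∧ ρ i ≤ 1) :
    ∀ μ ∈ spectrum ℂ
        ((1 - Matrix.diagonal (fun i => (ρ i : ℂ))) -
          Δ * Matrix.diagonal (fun i => (ρ i : ℂ))),
      ‖μ‖ < 1 := by
  intro μ hμ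
  set G := (1 - Matrix.diagonal (fun i => (ρ i : ℂ))) -
      Δ * Matrix.diagonal (fun i => (ρ i : ℂ)) with hG
  have hμT : μ ∈ spectrum ℂ Gᵀ := ilc_spectrum_transpose G hμ
  have hμ' : μ ∈ spectrum ℂ (Matrix.toLinAlgEquiv' Gᵀ) := by
    rwa [AlgEquiv.spectrum_eq]
  have heig : Module.End.HasEigenvalue (Matrix.toLin' Gᵀ) μ := by
    exact Module.End.HasEigenvalue.of_mem_spectrum hμ'
  obtain ⟨k, hk⟩ := eigenvalue_mem_ball heig
  rw [Metric.mem_closedBall, dist_eq_norm] at hk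
  have hGkk : Gᵀ k k = (1 - ρ k : ℂ) - Δ k k * ρ k := by
    simp [hG, Matrix.transpose_apply, Matrix.mul_apply, Matrix.diagonal_apply,
      Matrix.one_apply, Matrix.sub_apply]
  have hGkj : ∀ j, j ≠ k → Gᵀ k j = -(Δ j k * ρ k) := by
    intro j hj
    simp [hG, Matrix.transpose_apply, Matrix.mul_apply, Matrix.diagonal_apply,
      Matrix.one_apply, Matrix.sub_apply, hj, Ne.symm hj]
  have hk0 : 0 < ρ k := (hρ k).1
  have hk1 : ρ k ≤ 1 := (hρ k).2
  -- bound the off-diagonal sum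
  have hsum : ∑ j ∈ Finset.univ.erase k, ‖Gᵀ k j‖ =
      ρ k * ∑ j ∈ Finset.univ.erase k, ‖Δ j k‖ := by
    rw [Finset.mul_sum]
    refine Finset.sum_congr rfl fun j hj => ?_
    rw [hGkj j (Finset.mem_erase.mp hj).1, norm_neg, norm_mul, Complex.norm_real,
      Real.norm_eq_abs, abs_of_pos hk0]
    ring
  have hdiag : ‖(Gᵀ k k : ℂ)‖ ≤ (1 - ρ k) + ρ k * ‖Δ k k‖ := by
    rw [hGkk]
    refine (norm_sub_le _ _).trans (le_of_eq ?_)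
    have h1 : ‖(1 - (ρ k : ℂ))‖ = 1 - ρ k := by
      rw [show (1 - (ρ k : ℂ)) = ((1 - ρ k : ℝ) : ℂ) by push_cast; ring,
        Complex.norm_real, Real.norm_eq_abs, abs_of_nonneg (by linarith)]
    have h2 : ‖Δ k k * (ρ k : ℂ)‖ = ρ k * ‖Δ k k‖ := by
      rw [norm_mul, Complex.norm_real, Real.norm_eq_abs, abs_of_pos hk0]
      ring
    rw [h1, h2]
  have habs : ‖μ‖ ≤ ‖μ - Gᵀ k k‖ + ‖(Gᵀ k k : ℂ)‖ := by
    calc ‖μ‖ = ‖μ - Gᵀ k k + Gᵀ k k‖ := by rw [sub_add_cancel]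
      _ ≤ ‖μ - Gᵀ k k‖ + ‖(Gᵀ k k : ℂ)‖ := norm_add_le _ _
  have hfinal : ‖μ‖ ≤ (1 - ρ k) + ρ k * ∑ j, ‖Δ j k‖ := by
    have := h k
    have hsplit : ∑ j, ‖Δ j k‖ =
        ‖Δ k k‖ + ∑ j ∈ Finset.univ.erase k, ‖Δ j k‖ := by
      rw [← Finset.add_sum_erase _ _ (Finset.mem_univ k)]
    calc ‖μ‖ ≤ ‖μ - Gᵀ k k‖ + ‖(Gᵀ k k : ℂ)‖ := habs
      _ ≤ (ρ k * ∑ j ∈ Finset.univ.erase k, ‖Δ j k‖) +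
          ((1 - ρ k) + ρ k * ‖Δ k k‖) := by
            refine add_le_add ?_ hdiag
            rw [← hsum]; exact hk
      _ = (1 - ρ k) + ρ k * ∑ j, ‖Δ j k‖ := by
            rw [hsplit]; ring
  have hlt : (1 - ρ k) + ρ k * ∑ j, ‖Δ j k‖ < 1 := by
    have := h k
    nlinarith
  linarith

theorem ilc_small_gain_convergence (m : ℕ)
    (Δ : Matrix (Fin m) (Fin m) ℂ)
    (h : ∀ i, ∑ j, ‖Δ j i‖ < 1) :
    (∃ ρ₀ > (0 : ℝ), ∀ ρ : Fin m → ℝ, (∀ i, 0 < ρ i ∧ ρ i < ρ₀) →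
      ∀ μ ∈ spectrum ℂ
          ((1 - Matrix.diagonal (fun i => (ρ i : ℂ))) -
            Δ * Matrix.diagonal (fun i => (ρ i : ℂ))),
        ‖μ‖ < 1) ∧
    (∀ ρ : Fin m → ℝ, (∀ i, 0 < ρ i ∧ ρ i ≤ 1) →
      ∀ μ ∈ spectrum ℂ
          ((1 - Matrix.diagonal (fun i => (ρ i : ℂ))) -
            Δ * Matrix.diagonal (fun i => (ρ i : ℂ))),
        ‖μ‖ < 1) := by
  constructor
  · exact ⟨1, one_pos, fun ρ hρ => ilc_key Δ h ρ fun i => ⟨(hρ i).1, (hρ i).2.le⟩⟩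
  · exact fun ρ hρ => ilc_key Δ h ρ hρ
end
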